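/- For the tensor-space generalization: let k, d₁,…,d_s be positive integers, f ∈ Sym^{kd₁}(W₁*) ⊗ ⋯ ⊗ Sym^{kd_s}(W_s*), and let q₀,…,q_r be a basis of Sym^{d₁}(W₁*) ⊗ ⋯ ⊗ Sym^{d_s}(W_s*) with dual basis q₀*,…,q_r* with respect to the composed apolarity pairing D_s. Then ∏_{j=1}^s ((kd_j)!/d_j!^k) · f = ∑_{0 ≤ i₁,…,i_k ≤ r} D_s(q_{i₁}* ⋯ q_{i_k}*, f) q_{i₁} ⋯ q_{i_k}. -/

import Mathlib

open MvPolynomial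

set_option linter.unusedSectionVars false
set_option maxHeartbeats 1000000
noncomputable section

def derivOp (K : Type*) [Field K] {σ : Type*} [Fintype σ] [DecidableEq σ]
    (a : σ →₀ ℕ) : Module.End K (MvPolynomial σ K) :=
  (Finset.univ.toList.map fun j : σ => ((MvPolynomial.pderiv j).toLinearMap ^ (a j))).prod

/-- The composed apolarity pairing `D_s` (it acts by partial differentiation in
all the variables of all the factors, so it is the same derivative formula on
the polynomial model of `Sym^{d₁}(W₁*) ⊗ ⋯ ⊗ Sym^{d_s}(W_s*)`). -/
def apol {K : Type*} [Field K] {σ : Type*} [Fintype σ] [DecidableEq σ]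
    (u P : MvPolynomial σ K) : MvPolynomial σ K :=
  ∑ a ∈ u.support, u.coeff a • derivOp K a P

def apolS {K : Type*} [Field K] {σ : Type*} [Fintype σ] [DecidableEq σ]
    (u P : MvPolynomial σ K) : K :=
  MvPolynomial.constantCoeff (apol u P)

/-- `P` is multihomogeneous of multidegree `e`: every monomial of `P` has degree
`e j` in the block of variables belonging to the factor `W_j`.  This models
membership in `Sym^{e 1}(W₁*) ⊗ ⋯ ⊗ Sym^{e s}(W_s*)`. -/
def MultiHom {K : Type*} [Field K] {s : ℕ} {m : Fin s → ℕ}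
    (P : MvPolynomial ((j : Fin s) × Fin (m j)) K) (e : Fin s → ℕ) : Prop :=
  ∀ a ∈ P.support, ∀ j : Fin s, ∑ i : Fin (m j), a ⟨j, i⟩ = e j

section Part1
variable {K : Type*} [Field K] {σ : Type*} [Fintype σ] [DecidableEq σ]

lemma nat_desc_aux (b n : ℕ) : b * (b - 1).descFactorial n = b.descFactorial (n + 1) := by
  cases b with
  | zero => simp [Nat.descFactorial_succ]
  | succ t => rw [Nat.succ_descFactorial_succ]; simp

lemma nat_desc_add (n x y : ℕ) :
    n.descFactorial (x + y) = (n - x).descFactorial y * n.descFactorial x := by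
  induction y with
  | zero => simp
  | succ y ih =>
      rw [← Nat.add_assoc, Nat.descFactorial_succ, ih, Nat.descFactorial_succ,
        Nat.sub_sub, mul_assoc]

lemma sum_single_univ (a : σ →₀ ℕ) : ∑ c : σ, Finsupp.single c (a c) = a := by
  ext c'
  rw [Finset.sum_apply']
  simp [Finsupp.single_apply]

lemma pderiv_pow_monomial (c : σ) (n : ℕ) (b : σ →₀ ℕ) (r : K) :
    (((pderiv c).toLinearMap ^ n) (monomial b r)) =
      ((b c).descFactorial n : K) • monomial (b - Finsupp.single c n) r := by
  induction n generalizing b r with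
  | zero => simp
  | succ n ih =>
      rw [pow_succ, Module.End.mul_apply, Derivation.coeFn_coe, pderiv_monomial, ih]
      have h1 : (b - Finsupp.single c 1 : σ →₀ ℕ) c = b c - 1 := by simp
      have h2 : b - Finsupp.single c 1 - Finsupp.single c n = b - Finsupp.single c (n + 1) := by
        rw [tsub_tsub, ← Finsupp.single_add, add_comm]
      rw [h1, h2, MvPolynomial.smul_monomial, MvPolynomial.smul_monomial]
      rw [← nat_desc_aux]
      congr 1
      simp only [smul_eq_mul]
      push_cast
      ring

lemma single_sum_apply_eq_zero {t : Finset σ} {c₀ : σ} (h : c₀ ∉ t) (a : σ →₀ ℕ) :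
    (∑ c ∈ t, Finsupp.single c (a c)) c₀ = 0 := by
  rw [Finset.sum_apply']
  refine Finset.sum_eq_zero fun c hc => ?_
  exact Finsupp.single_eq_of_ne (fun hh => h (hh ▸ hc))

lemma derivOp_monomial_list (l : List σ) (hl : l.Nodup) (a b : σ →₀ ℕ) (r : K) :
    ((l.map fun c => ((pderiv c).toLinearMap ^ (a c))).prod) (monomial b r) =
      ((∏ c ∈ l.toFinset, (b c).descFactorial (a c) : ℕ) : K) •
        monomial (b - ∑ c ∈ l.toFinset, Finsupp.single c (a c)) r := by
  induction l with
  | nil => simp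
  | cons c₀ l ih =>
      rcases List.nodup_cons.mp hl with ⟨hc₀, hl'⟩
      rw [List.map_cons, List.prod_cons, Module.End.mul_apply, ih hl', map_smul,
        pderiv_pow_monomial]
      have hc₀f : c₀ ∉ l.toFinset := fun h => hc₀ (List.mem_toFinset.mp h)
      have h1 : (b - ∑ c ∈ l.toFinset, Finsupp.single c (a c) : σ →₀ ℕ) c₀ = b c₀ := by
        rw [Finsupp.tsub_apply, single_sum_apply_eq_zero hc₀f, Nat.sub_zero]
      rw [h1, List.toFinset_cons, Finset.sum_insert hc₀f, Finset.prod_insert hc₀f,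
        tsub_tsub, smul_smul]
      congr 2
      · push_cast; ring
      · rw [add_comm]

lemma derivOp_monomial (a b : σ →₀ ℕ) (r : K) :
    derivOp K a (monomial b r) =
      ((∏ c, (b c).descFactorial (a c) : ℕ) : K) • monomial (b - a) r := by
  have := derivOp_monomial_list (K := K) Finset.univ.toList (Finset.nodup_toList _) a b r
  rwa [Finset.toList_toFinset, sum_single_univ] at this

def NFact (a : σ →₀ ℕ) : ℕ := ∏ c, (a c).factorial

lemma NFact_ne_zero (a : σ →₀ ℕ) : NFact a ≠ 0 :=
  (Finset.prod_pos fun c _ => Nat.factorial_pos _).ne'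

lemma constantCoeff_smul' (c : K) (P : MvPolynomial σ K) :
    constantCoeff (c • P) = c * constantCoeff P := by
  rw [MvPolynomial.smul_eq_C_mul, map_mul, constantCoeff_C]

lemma apol_monomial_left (a : σ →₀ ℕ) (r : K) (P : MvPolynomial σ K) :
    apol (monomial a r) P = r • derivOp K a P := by
  classical
  unfold apol
  by_cases hr : r = 0
  · simp [hr]
  · rw [support_monomial, if_neg hr, Finset.sum_singleton, coeff_monomial, if_pos rfl]

lemma apolS_monomial (a b : σ →₀ ℕ) (r r' : K) :
    apolS (monomial a r) (monomial b r') =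
      if a = b then r * r' * (NFact a : K) else 0 := by
  unfold apolS
  classical
  rw [apol_monomial_left, derivOp_monomial, constantCoeff_smul', constantCoeff_smul',
    constantCoeff_monomial]
  by_cases h : a = b
  · subst h
    rw [if_pos rfl, if_pos (tsub_self a)]
    simp only [mul_one, NFact]
    rw [Finset.prod_congr rfl fun c _ => Nat.descFactorial_self (a c)]
    ring
  · rw [if_neg h]
    by_cases hle : a ≤ b
    · rw [if_neg, mul_zero, mul_zero]
      intro hba
      exact h (le_antisymm hle (tsub_eq_zero_iff_le.mp hba))
    · have : ∃ c, b c < a c := by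
        by_contra hc
        push_neg at hc
        exact hle (Finsupp.le_def.mpr fun c => hc c)
      obtain ⟨c, hc⟩ := this
      have : (∏ c, (b c).descFactorial (a c)) = 0 :=
        Finset.prod_eq_zero (Finset.mem_univ c) (Nat.descFactorial_eq_zero_iff_lt.mpr hc)
      rw [this]
      simp

lemma apol_eq_sum_subset {u : MvPolynomial σ K} {S : Finset (σ →₀ ℕ)} (h : u.support ⊆ S)
    (P : MvPolynomial σ K) :
    apol u P = ∑ a ∈ S, u.coeff a • derivOp K a P := by
  refine Finset.sum_subset h fun a _ ha => ?_
  rw [notMem_support_iff.mp ha, zero_smul]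

lemma apol_add_left (u v P : MvPolynomial σ K) :
    apol (u + v) P = apol u P + apol v P := by
  classical
  set S := (u + v).support ∪ (u.support ∪ v.support) with hS
  rw [apol_eq_sum_subset (S := S) Finset.subset_union_left P,
    apol_eq_sum_subset (S := S)
      (fun x hx => Finset.mem_union_right _ (Finset.mem_union_left _ hx)) P,
    apol_eq_sum_subset (S := S)
      (fun x hx => Finset.mem_union_right _ (Finset.mem_union_right _ hx)) P,
    ← Finset.sum_add_distrib]
  refine Finset.sum_congr rfl fun a _ => ?_
  rw [coeff_add, add_smul]

lemma apol_smul_left (c : K) (u P : MvPolynomial σ K) :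
    apol (c • u) P = c • apol u P := by
  classical
  set S := (c • u).support ∪ u.support with hS
  rw [apol_eq_sum_subset (S := S) Finset.subset_union_left P,
    apol_eq_sum_subset (S := S) Finset.subset_union_right P, Finset.smul_sum]
  refine Finset.sum_congr rfl fun a _ => ?_
  rw [coeff_smul, smul_eq_mul, mul_smul]

lemma apol_add_right (u P Q : MvPolynomial σ K) :
    apol u (P + Q) = apol u P + apol u Q := by
  unfold apol
  rw [← Finset.sum_add_distrib]
  refine Finset.sum_congr rfl fun a _ => ?_
  rw [map_add, smul_add]

lemma apol_smul_right (c : K) (u P : MvPolynomial σ K) :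
    apol u (c • P) = c • apol u P := by
  unfold apol
  rw [Finset.smul_sum]
  refine Finset.sum_congr rfl fun a _ => ?_
  rw [map_smul, smul_comm]

def apolB : MvPolynomial σ K →ₗ[K] MvPolynomial σ K →ₗ[K] K :=
  LinearMap.mk₂ K apolS
    (fun u v P => by unfold apolS; rw [apol_add_left, map_add])
    (fun c u P => by unfold apolS; rw [apol_smul_left, constantCoeff_smul']; rfl)
    (fun u P Q => by unfold apolS; rw [apol_add_right, map_add])
    (fun c u P => by unfold apolS; rw [apol_smul_right, constantCoeff_smul']; rfl)

lemma apolS_sum_left {α : Type*} (S : Finset α) (g : α → MvPolynomial σ K)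
    (P : MvPolynomial σ K) :
    apolS (∑ i ∈ S, g i) P = ∑ i ∈ S, apolS (g i) P := by
  calc apolS (∑ i ∈ S, g i) P = apolB (∑ i ∈ S, g i) P := rfl
    _ = (∑ i ∈ S, apolB (g i)) P := by rw [map_sum]
    _ = ∑ i ∈ S, apolB (g i) P := LinearMap.sum_apply _ _ _
    _ = ∑ i ∈ S, apolS (g i) P := rfl

lemma apolS_sum_right {α : Type*} (S : Finset α) (u : MvPolynomial σ K)
    (g : α → MvPolynomial σ K) :
    apolS u (∑ i ∈ S, g i) = ∑ i ∈ S, apolS u (g i) := map_sum (apolB u) _ _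

lemma apolS_smul_right (c : K) (u P : MvPolynomial σ K) :
    apolS u (c • P) = c * apolS u P := by
  unfold apolS; rw [apol_smul_right, constantCoeff_smul']

lemma apolS_monomial_left (a : σ →₀ ℕ) (r : K) (P : MvPolynomial σ K) :
    apolS (monomial a r) P = r * (NFact a : K) * coeff a P := by
  conv_lhs => rw [P.as_sum, apolS_sum_right]
  rw [Finset.sum_congr rfl fun e _ => apolS_monomial a e r (coeff e P)]
  rw [Finset.sum_ite_eq P.support a fun e => r * coeff e P * (NFact a : K)]
  by_cases h : a ∈ P.support
  · rw [if_pos h]; ring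
  · rw [if_neg h, notMem_support_iff.mp h, mul_zero]

end Part1

section Part2
variable {K : Type*} [Field K] {s : ℕ} {m : Fin s → ℕ}

abbrev σT (m : Fin s → ℕ) := (j : Fin s) × Fin (m j)

def Lb (K : Type*) [Field K] (m : Fin s → ℕ) (j : Fin s) : MvPolynomial (σT m) K :=
  ∑ i : Fin (m j), X ⟨j, i⟩

def Pw (K : Type*) [Field K] (m : Fin s → ℕ) (n : Fin s → ℕ) : MvPolynomial (σT m) K :=
  ∏ j, (Lb K m j) ^ (n j)

def bdeg (a : σT m →₀ ℕ) (j : Fin s) : ℕ := ∑ i : Fin (m j), a ⟨j, i⟩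

lemma pderiv_Lb (c : σT m) (j : Fin s) :
    pderiv c (Lb K m j) = if c.1 = j then 1 else 0 := by
  obtain ⟨j₀, i₀⟩ := c
  rw [Lb, map_sum]
  by_cases h : j₀ = j
  · subst h
    rw [if_pos rfl]
    rw [Finset.sum_eq_single i₀ (fun i _ hi => pderiv_X_of_ne (by simp [Sigma.mk.inj_iff, hi]))
      (fun h => absurd (Finset.mem_univ i₀) h)]
    exact pderiv_X_self _
  · rw [if_neg h]
    exact Finset.sum_eq_zero fun i _ => pderiv_X_of_ne (by simp [Sigma.mk.inj_iff, Ne.symm h])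

lemma pderiv_prod_zero (c : σT m) (n : Fin s → ℕ) (t : Finset (Fin s)) (h : c.1 ∉ t) :
    pderiv c (∏ j ∈ t, (Lb K m j) ^ (n j)) = 0 := by
  induction t using Finset.induction_on with
  | empty => simp [pderiv_one]
  | @insert j₀ t' hx ih =>
      rw [Finset.prod_insert hx, pderiv_mul, pderiv_pow, pderiv_Lb,
        if_neg (fun hh => h (by rw [hh]; exact Finset.mem_insert_self _ _)),
        ih (fun hh => h (Finset.mem_insert_of_mem hh))]
      ring

lemma pderiv_Pw (c : σT m) (n : Fin s → ℕ) :
    pderiv c (Pw K m n) =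
      (n c.1 : MvPolynomial (σT m) K) * Pw K m (Function.update n c.1 (n c.1 - 1)) := by
  classical
  obtain ⟨j₀, i₀⟩ := c
  have h1 : Pw K m n = (Lb K m j₀) ^ (n j₀) * ∏ j ∈ Finset.univ.erase j₀, (Lb K m j) ^ (n j) :=
    (Finset.mul_prod_erase Finset.univ _ (Finset.mem_univ j₀)).symm
  have h2 : Pw K m (Function.update n j₀ (n j₀ - 1)) =
      (Lb K m j₀) ^ (n j₀ - 1) * ∏ j ∈ Finset.univ.erase j₀, (Lb K m j) ^ (n j) := by
    rw [Pw, ← Finset.mul_prod_erase Finset.univ _ (Finset.mem_univ j₀),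
      Function.update_self]
    congr 1
    exact Finset.prod_congr rfl fun j hj =>
      by rw [Function.update_of_ne (Finset.ne_of_mem_erase hj)]
  rw [h1, pderiv_mul, pderiv_prod_zero _ n _ (Finset.notMem_erase j₀ _), mul_zero, add_zero,
    pderiv_pow, pderiv_Lb, if_pos rfl, mul_one, h2]
  ring

lemma pderiv_pow_Pw (c : σT m) (t : ℕ) (n : Fin s → ℕ) :
    ((pderiv c).toLinearMap ^ t) (Pw K m n) =
      (((n c.1).descFactorial t : ℕ) : MvPolynomial (σT m) K) *
        Pw K m (Function.update n c.1 (n c.1 - t)) := by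
  classical
  induction t generalizing n with
  | zero => simp [Function.update_eq_self]
  | succ t ih =>
      rw [pow_succ, Module.End.mul_apply, Derivation.coeFn_coe, pderiv_Pw,
        ← nsmul_eq_mul, map_nsmul, ih, nsmul_eq_mul]
      have hupd : Function.update (Function.update n c.1 (n c.1 - 1)) c.1
          (n c.1 - 1 - t) = Function.update n c.1 (n c.1 - (t + 1)) := by
        rw [Function.update_idem, Nat.sub_sub, Nat.add_comm 1 t]
      rw [Function.update_self, hupd, ← mul_assoc, ← Nat.cast_mul, nat_desc_aux]

lemma derivOp_Pw_list (l : List (σT m)) (hl : l.Nodup) (b : σT m →₀ ℕ) (n : Fin s → ℕ) :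
    ((l.map fun c => ((pderiv c).toLinearMap ^ (b c))).prod) (Pw K m n) =
      ((∏ j, (n j).descFactorial (∑ c ∈ l.toFinset.filter (fun c => c.1 = j), b c) : ℕ) :
          MvPolynomial (σT m) K) *
        Pw K m (fun j => n j - ∑ c ∈ l.toFinset.filter (fun c => c.1 = j), b c) := by
  classical
  induction l generalizing n with
  | nil => simp
  | cons c₀ l ih =>
      rcases List.nodup_cons.mp hl with ⟨hc₀, hl'⟩
      have hc₀f : c₀ ∉ l.toFinset := fun h => hc₀ (List.mem_toFinset.mp h)
      set Bt := fun j => ∑ c ∈ l.toFinset.filter (fun c => c.1 = j), b c with hBt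
      have hBl : ∀ j, (∑ c ∈ (c₀ :: l).toFinset.filter (fun c => c.1 = j), b c) =
          if j = c₀.1 then Bt j + b c₀ else Bt j := by
        intro j
        rw [List.toFinset_cons, Finset.filter_insert]
        by_cases h : c₀.1 = j
        · rw [if_pos h, if_pos h.symm, Finset.sum_insert (fun hh => hc₀f (Finset.mem_of_mem_filter _ hh)), add_comm]
        · rw [if_neg h, if_neg (fun hh => h hh.symm)]
      have hupd : Function.update (fun j => n j - Bt j) c₀.1 (n c₀.1 - Bt c₀.1 - b c₀) =
          fun j => n j - (if j = c₀.1 then Bt j + b c₀ else Bt j) := by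
        funext j
        by_cases h : j = c₀.1
        · subst h; rw [Function.update_self, if_pos rfl, Nat.sub_sub]
        · rw [Function.update_of_ne h, if_neg h]
      rw [List.map_cons, List.prod_cons, Module.End.mul_apply, ih hl',
        ← nsmul_eq_mul, map_nsmul, pderiv_pow_Pw, nsmul_eq_mul, hupd]
      have hsc : (∏ j, (n j).descFactorial (Bt j)) *
          (n c₀.1 - Bt c₀.1).descFactorial (b c₀) =
          ∏ j, (n j).descFactorial (if j = c₀.1 then Bt j + b c₀ else Bt j) := by
        rw [← Finset.mul_prod_erase Finset.univ
            (fun j => (n j).descFactorial (if j = c₀.1 then Bt j + b c₀ else Bt j))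
            (Finset.mem_univ c₀.1), if_pos rfl, nat_desc_add,
          ← Finset.mul_prod_erase Finset.univ (fun j => (n j).descFactorial (Bt j))
            (Finset.mem_univ c₀.1)]
        have herase : ∀ j ∈ Finset.univ.erase c₀.1,
            (n j).descFactorial (if j = c₀.1 then Bt j + b c₀ else Bt j) =
              (n j).descFactorial (Bt j) :=
          fun j hj => by rw [if_neg (Finset.ne_of_mem_erase hj)]
        rw [Finset.prod_congr rfl herase]
        ring
      have hfun : (fun j => n j - ∑ c ∈ (c₀ :: l).toFinset.filter (fun c => c.1 = j), b c) =
          fun j => n j - (if j = c₀.1 then Bt j + b c₀ else Bt j) :=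
        funext fun j => by rw [hBl j]
      have hcoef : (∏ j, (n j).descFactorial
            (∑ c ∈ (c₀ :: l).toFinset.filter (fun c => c.1 = j), b c)) =
          ∏ j, (n j).descFactorial (if j = c₀.1 then Bt j + b c₀ else Bt j) :=
        Finset.prod_congr rfl fun j _ => by rw [hBl j]
      rw [hfun, hcoef, ← hsc]
      push_cast
      ring

lemma bdeg_filter (b : σT m →₀ ℕ) (j : Fin s) :
    (∑ c ∈ Finset.univ.filter (fun c : σT m => c.1 = j), b c) = bdeg b j := by
  classical
  rw [Finset.sum_filter, ← Finset.univ_sigma_univ, Finset.sum_sigma]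
  rw [Finset.sum_congr rfl (fun j' _ => ?_ :
    ∀ j' ∈ Finset.univ, (∑ i : Fin (m j'), if (⟨j', i⟩ : σT m).1 = j then b ⟨j', i⟩ else 0) =
      if j' = j then bdeg b j' else 0)]
  · rw [Finset.sum_ite_eq' Finset.univ j fun j' => bdeg b j', if_pos (Finset.mem_univ j)]
  · by_cases h : j' = j <;> simp [h, bdeg]

lemma derivOp_Pw (b : σT m →₀ ℕ) (n : Fin s → ℕ) :
    derivOp K b (Pw K m n) =
      ((∏ j, (n j).descFactorial (bdeg b j) : ℕ) : MvPolynomial (σT m) K) *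
        Pw K m (fun j => n j - bdeg b j) := by
  have := derivOp_Pw_list (K := K) Finset.univ.toList (Finset.nodup_toList _) b n
  rw [Finset.toList_toFinset] at this
  simp only [bdeg_filter] at this; exact this

lemma constantCoeff_Pw (n : Fin s → ℕ) :
    constantCoeff (Pw K m n) = if (∀ j, n j = 0) then 1 else 0 := by
  rw [Pw, map_prod]
  have h1 : ∀ j, constantCoeff ((Lb K m j) ^ (n j)) = (0 : K) ^ (n j) := by
    intro j
    rw [map_pow, Lb, map_sum]
    congr 1
    exact Finset.sum_eq_zero fun i _ => constantCoeff_X (R := K) (⟨j, i⟩ : σT m)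
  rw [Finset.prod_congr rfl fun j _ => h1 j]
  by_cases h : ∀ j, n j = 0
  · rw [if_pos h]
    exact Finset.prod_eq_one fun j _ => by rw [h j, pow_zero]
  · rw [if_neg h]
    push_neg at h
    obtain ⟨j₀, hj₀⟩ := h
    exact Finset.prod_eq_zero (Finset.mem_univ j₀) (zero_pow hj₀)

lemma apolS_Pw (b : σT m →₀ ℕ) (n : Fin s → ℕ) :
    apolS (monomial b (1 : K)) (Pw K m n) =
      if (∀ j, bdeg b j = n j) then ((∏ j, (n j).factorial : ℕ) : K) else 0 := by
  unfold apolS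
  rw [apol_monomial_left, one_smul, derivOp_Pw, map_mul, constantCoeff_Pw]
  have hcast : constantCoeff ((((∏ j, (n j).descFactorial (bdeg b j) : ℕ)) :
      MvPolynomial (σT m) K)) = ((∏ j, (n j).descFactorial (bdeg b j) : ℕ) : K) := by
    rw [← C_eq_coe_nat, constantCoeff_C]
  rw [hcast]
  by_cases h : ∀ j, bdeg b j = n j
  · rw [if_pos h, if_pos (fun j => by rw [h j, Nat.sub_self]), mul_one]
    have hp : (∏ j, (n j).descFactorial (bdeg b j)) = ∏ j, (n j).factorial :=
      Finset.prod_congr rfl fun j _ => by rw [h j, Nat.descFactorial_self]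
    rw [hp]
  · rw [if_neg h]
    push_neg at h
    obtain ⟨j₀, hj₀⟩ := h
    rcases Nat.lt_or_ge (n j₀) (bdeg b j₀) with hlt | hge
    · have : (∏ j, (n j).descFactorial (bdeg b j)) = 0 :=
        Finset.prod_eq_zero (Finset.mem_univ j₀) (Nat.descFactorial_eq_zero_iff_lt.mpr hlt)
      rw [this, Nat.cast_zero, zero_mul]
    · rw [if_neg, mul_zero]
      intro hall
      have := hall j₀
      omega

lemma coeff_Pw [CharZero K] (b : σT m →₀ ℕ) (n : Fin s → ℕ) :
    coeff b (Pw K m n) =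
      if (∀ j, bdeg b j = n j) then ((∏ j, (n j).factorial : ℕ) : K) / (NFact b : K) else 0 := by
  have h := apolS_Pw (K := K) b n
  rw [apolS_monomial_left, one_mul] at h
  have hne : ((NFact b : ℕ) : K) ≠ 0 := Nat.cast_ne_zero.mpr (NFact_ne_zero b)
  by_cases hc : ∀ j, bdeg b j = n j
  · rw [if_pos hc] at h ⊢
    rw [eq_div_iff hne, mul_comm, h]
  · rw [if_neg hc] at h ⊢
    exact (mul_eq_zero.mp h).elim (fun hh => absurd hh hne) id

open Finsupp in
def SdF (m : Fin s → ℕ) (d : Fin s → ℕ) : Finset (σT m →₀ ℕ) :=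
  (Finset.Iic (equivFunOnFinite.symm (fun c : σT m => d c.1))).filter
    (fun a => ∀ j, bdeg a j = d j)

lemma mem_SdF {d : Fin s → ℕ} (a : σT m →₀ ℕ) :
    a ∈ SdF m d ↔ ∀ j, bdeg a j = d j := by
  constructor
  · exact fun h => (Finset.mem_filter.mp h).2
  · intro h
    refine Finset.mem_filter.mpr ⟨Finset.mem_Iic.mpr ?_, h⟩
    rw [Finsupp.le_def]
    intro c
    obtain ⟨j, i⟩ := c
    have : a ⟨j, i⟩ ≤ bdeg a j :=
      Finset.single_le_sum (f := fun i' => a ⟨j, i'⟩) (fun _ _ => Nat.zero_le _)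
        (Finset.mem_univ i)
    simpa [h j] using this

lemma monomial_prod {K : Type*} [Field K] {σ : Type*} [Fintype σ] [DecidableEq σ]
    {α : Type*} (S : Finset α) (g : α → (σ →₀ ℕ)) (c : α → K) :
    ∏ i ∈ S, monomial (g i) (c i) = monomial (∑ i ∈ S, g i) (∏ i ∈ S, c i) := by
  classical
  induction S using Finset.induction_on with
  | empty => simp
  | @insert a S ha ih =>
      rw [Finset.prod_insert ha, Finset.prod_insert ha, Finset.sum_insert ha, ih,
        monomial_mul]

lemma Pw_eq_sum [CharZero K] (d : Fin s → ℕ) :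
    Pw K m d = ∑ a ∈ SdF m d,
      monomial a (((∏ j, (d j).factorial : ℕ) : K) / (NFact a : K)) := by
  apply MvPolynomial.ext
  intro b
  rw [coeff_Pw, coeff_sum]
  rw [Finset.sum_congr rfl fun a (_ : a ∈ SdF m d) =>
    (coeff_monomial b a (((∏ j, (d j).factorial : ℕ) : K) / (NFact a : K)))]
  rw [Finset.sum_ite_eq' (SdF m d) b fun a => ((∏ j, (d j).factorial : ℕ) : K) / (NFact a : K)]
  by_cases h : ∀ j, bdeg b j = d j
  · rw [if_pos h, if_pos ((mem_SdF b).mpr h)]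
  · rw [if_neg h, if_neg (fun hh => h ((mem_SdF b).mp hh))]

lemma key_sum [CharZero K] (k : ℕ) (d : Fin s → ℕ) (e : σT m →₀ ℕ)
    (he : ∀ j, bdeg e j = k * d j) :
    ∑ u ∈ Fintype.piFinset (fun _ : Fin k => SdF m d),
      (if (∑ l, u l) = e then (NFact e : K) * (∏ l, (NFact (u l) : K))⁻¹ else 0)
      = ∏ j, ((k * d j).factorial : K) / ((d j).factorial : K) ^ k := by
  classical
  set Fd : K := ((∏ j, (d j).factorial : ℕ) : K) with hFdDef
  have hFd : Fd ≠ 0 := Nat.cast_ne_zero.mpr (Finset.prod_pos fun j _ => Nat.factorial_pos _).ne'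
  have hFdk : Fd ^ k ≠ 0 := pow_ne_zero _ hFd
  have hNe : (NFact e : K) ≠ 0 := Nat.cast_ne_zero.mpr (NFact_ne_zero e)
  have hA : (Pw K m d) ^ k = Pw K m (fun j => k * d j) := by
    rw [Pw, Pw, ← Finset.prod_pow]
    exact Finset.prod_congr rfl fun j _ => by rw [← pow_mul, Nat.mul_comm]
  have h2 : coeff e ((Pw K m d) ^ k) = ((∏ j, (k * d j).factorial : ℕ) : K) / (NFact e : K) := by
    rw [hA, coeff_Pw, if_pos he]
  have h3 : (Pw K m d) ^ k = ∑ u ∈ Fintype.piFinset (fun _ : Fin k => SdF m d),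
      monomial (∑ l, u l) (∏ l, Fd / (NFact (u l) : K)) := by
    have hconst : ∏ _l : Fin k, Pw K m d = (Pw K m d) ^ k := by
      rw [Finset.prod_const, Finset.card_univ, Fintype.card_fin]
    rw [← hconst, Finset.prod_congr rfl fun l (_ : l ∈ Finset.univ) => Pw_eq_sum d,
      Finset.prod_univ_sum]
    exact Finset.sum_congr rfl fun u _ => monomial_prod _ _ _
  have hEq : ∑ u ∈ Fintype.piFinset (fun _ : Fin k => SdF m d),
      (if (∑ l, u l) = e then ∏ l, Fd / (NFact (u l) : K) else 0)
      = ((∏ j, (k * d j).factorial : ℕ) : K) / (NFact e : K) := by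
    rw [← h2, h3, coeff_sum]
    exact Finset.sum_congr rfl fun u _ => (coeff_monomial e _ _).symm
  have hstep : ∀ u : Fin k → (σT m →₀ ℕ),
      ∏ l, Fd / (NFact (u l) : K) = Fd ^ k * (∏ l, (NFact (u l) : K))⁻¹ := by
    intro u
    rw [Finset.prod_div_distrib, Finset.prod_const, Finset.card_univ, Fintype.card_fin,
      div_eq_mul_inv]
  calc ∑ u ∈ Fintype.piFinset (fun _ : Fin k => SdF m d),
      (if (∑ l, u l) = e then (NFact e : K) * (∏ l, (NFact (u l) : K))⁻¹ else 0)
      = ((NFact e : K) * (Fd ^ k)⁻¹) * ∑ u ∈ Fintype.piFinset (fun _ : Fin k => SdF m d),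
        (if (∑ l, u l) = e then ∏ l, Fd / (NFact (u l) : K) else 0) := by
        rw [Finset.mul_sum]
        refine Finset.sum_congr rfl fun u _ => ?_
        rw [hstep u, mul_ite, mul_zero]
        by_cases hcond : (∑ l, u l) = e
        · rw [if_pos hcond, if_pos hcond, ← mul_assoc, mul_assoc ((NFact e : K)),
            inv_mul_cancel₀ hFdk, mul_one]
        · rw [if_neg hcond, if_neg hcond]
    _ = ((NFact e : K) * (Fd ^ k)⁻¹) * (((∏ j, (k * d j).factorial : ℕ) : K) / (NFact e : K)) := by
        rw [hEq]
    _ = ∏ j, ((k * d j).factorial : K) / ((d j).factorial : K) ^ k := by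
        rw [Finset.prod_div_distrib, Finset.prod_pow, hFdDef]
        push_cast
        have hFd' : (∏ x : Fin s, ((d x).factorial : K)) ≠ 0 :=
          Finset.prod_ne_zero_iff.mpr fun x _ =>
            Nat.cast_ne_zero.mpr (Nat.factorial_pos _).ne'
        field_simp

end Part2

section Part4
variable {K : Type*} [Field K] {s : ℕ} {m : Fin s → ℕ}

lemma multihom_eq_sum {d : Fin s → ℕ} {g : MvPolynomial (σT m) K} (hg : MultiHom g d) :
    g = ∑ a ∈ SdF m d, monomial a (coeff a g) := by
  conv_lhs => rw [g.as_sum]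
  refine Finset.sum_subset (fun a ha => (mem_SdF a).mpr (fun j => hg a ha j))
    (fun a _ ha => ?_)
  rw [notMem_support_iff.mp ha, map_zero]

end Part4

/-- tensor-space generalization of the Taylor-like identity.
If `q₀,…,q_r` is a basis of `Sym^{d₁}(W₁*)⊗⋯⊗Sym^{d_s}(W_s*)` with dual basis
`q₀*,…,q_r*` with respect to the composed apolarity pairing `D_s`, then for
every `f ∈ Sym^{kd₁}(W₁*)⊗⋯⊗Sym^{kd_s}(W_s*)`,
`∏_j ((kd_j)!/d_j!^k) · f = ∑ D_s(q_{i₁}*⋯q_{i_k}*, f) q_{i₁}⋯q_{i_k}`. -/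
theorem taylor_identity_tensor
    (K : Type*) [Field K] [CharZero K] (s k : ℕ) (hs : 1 ≤ s) (hk : 1 ≤ k)
    (m : Fin s → ℕ) (hm : ∀ j, 1 ≤ m j) (d : Fin s → ℕ) (hd : ∀ j, 1 ≤ d j)
    (ι : Type*) [Fintype ι] [DecidableEq ι]
    (q qstar : ι → MvPolynomial ((j : Fin s) × Fin (m j)) K)
    (hq : ∀ i, MultiHom (q i) d) (hqstar : ∀ i, MultiHom (qstar i) d)
    (hspan : ∀ g : MvPolynomial ((j : Fin s) × Fin (m j)) K,
      MultiHom g d → g ∈ Submodule.span K (Set.range q))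
    (hdual : ∀ i j, apolS (qstar i) (q j) = if i = j then 1 else 0)
    (f : MvPolynomial ((j : Fin s) × Fin (m j)) K)
    (hf : MultiHom f (fun j => k * d j)) :
    (∏ j, (Nat.factorial (k * d j) : K) / (Nat.factorial (d j) : K) ^ k) • f
      = ∑ t : Fin k → ι, apolS (∏ l, qstar (t l)) f • ∏ l, q (t l) := by
  classical
  set A : ι → (σT m →₀ ℕ) → K := fun i a => coeff a (q i) with hA
  set B : ι → (σT m →₀ ℕ) → K := fun i a => coeff a (qstar i) with hB
  set SD := SdF m d with hSD
  set PF := Fintype.piFinset (fun _ : Fin k => SD) with hPF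
  have hsupq : ∀ i, q i = ∑ a ∈ SD, monomial a (A i a) := fun i => multihom_eq_sum (hq i)
  have hsupqs : ∀ i, qstar i = ∑ a ∈ SD, monomial a (B i a) :=
    fun i => multihom_eq_sum (hqstar i)
  have hpair : ∀ (i : ι), ∀ a ∈ SD, apolS (qstar i) (monomial a (1 : K)) =
      B i a * (NFact a : K) := by
    intro i a ha
    conv_lhs => rw [hsupqs i]
    rw [apolS_sum_left,
      Finset.sum_congr rfl fun b (_ : b ∈ SD) => apolS_monomial b a (B i b) 1,
      Finset.sum_ite_eq' SD a fun b => B i b * 1 * (NFact b : K), if_pos ha, mul_one]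
  have hmono_span : ∀ a ∈ SD, (monomial a (1 : K) : MvPolynomial (σT m) K) =
      ∑ i, (B i a * (NFact a : K)) • q i := by
    intro a ha
    have hmh : MultiHom (monomial a (1 : K)) d := by
      intro b hb j
      rw [support_monomial, if_neg (one_ne_zero : (1 : K) ≠ 0), Finset.mem_singleton] at hb
      subst hb
      exact (mem_SdF b).mp ha j
    obtain ⟨c, hc⟩ := (Submodule.mem_span_range_iff_exists_fun K).mp (hspan _ hmh)
    have hci : ∀ i₀, c i₀ = B i₀ a * (NFact a : K) := by
      intro i₀
      have h1 : apolS (qstar i₀) (∑ i, c i • q i) = c i₀ := by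
        rw [apolS_sum_right,
          Finset.sum_congr rfl fun i (_ : i ∈ Finset.univ) =>
            (by rw [apolS_smul_right, hdual i₀ i] :
              apolS (qstar i₀) (c i • q i) = c i * if i₀ = i then 1 else 0)]
        simp
      rw [← h1, hc, hpair i₀ a ha]
    rw [← hc]
    exact Finset.sum_congr rfl fun i _ => by rw [hci i]
  have horth : ∀ a ∈ SD, ∀ b ∈ SD, ∑ i, B i a * A i b =
      (if a = b then 1 else 0) * (NFact a : K)⁻¹ := by
    intro a ha b hb
    have hNa : (NFact a : K) ≠ 0 := Nat.cast_ne_zero.mpr (NFact_ne_zero a)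
    have h1 := congrArg (coeff b) (hmono_span a ha)
    rw [coeff_monomial, MvPolynomial.coeff_sum,
      Finset.sum_congr rfl fun i (_ : i ∈ Finset.univ) =>
        (by rw [coeff_smul, smul_eq_mul] :
          coeff b ((B i a * (NFact a : K)) • q i) = (B i a * (NFact a : K)) * A i b)] at h1
    rw [h1, Finset.sum_mul]
    refine Finset.sum_congr rfl fun i _ => ?_
    field_simp
  have hqprod : ∀ t : Fin k → ι, ∏ l, q (t l) =
      ∑ v ∈ PF, monomial (∑ l, v l) (∏ l, A (t l) (v l)) := by
    intro t
    rw [Finset.prod_congr rfl fun l (_ : l ∈ Finset.univ) => hsupq (t l),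
      Finset.prod_univ_sum]
    exact Finset.sum_congr rfl fun v _ => monomial_prod _ _ _
  have hqsprod : ∀ t : Fin k → ι, ∏ l, qstar (t l) =
      ∑ u ∈ PF, monomial (∑ l, u l) (∏ l, B (t l) (u l)) := by
    intro t
    rw [Finset.prod_congr rfl fun l (_ : l ∈ Finset.univ) => hsupqs (t l),
      Finset.prod_univ_sum]
    exact Finset.sum_congr rfl fun u _ => monomial_prod _ _ _
  set W : (Fin k → (σT m →₀ ℕ)) → K :=
    fun u => (NFact (∑ l, u l) : K) * coeff (∑ l, u l) f with hW
  have hapolSf : ∀ t : Fin k → ι, apolS (∏ l, qstar (t l)) f =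
      ∑ u ∈ PF, (∏ l, B (t l) (u l)) * W u := by
    intro t
    rw [hqsprod t, apolS_sum_left]
    refine Finset.sum_congr rfl fun u _ => ?_
    rw [apolS_monomial_left, hW]
    ring
  have key : ∀ t : Fin k → ι, apolS (∏ l, qstar (t l)) f • ∏ l, q (t l)
      = ∑ u ∈ PF, ∑ v ∈ PF,
        ((∏ l, B (t l) (u l) * A (t l) (v l)) * W u) • monomial (∑ l, v l) (1 : K) := by
    intro t
    rw [hapolSf t, hqprod t, Finset.sum_smul]
    refine Finset.sum_congr rfl fun u _ => ?_
    rw [Finset.smul_sum]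
    refine Finset.sum_congr rfl fun v _ => ?_
    rw [Finset.prod_mul_distrib,
      (by rw [MvPolynomial.smul_monomial, smul_eq_mul, mul_one] :
        monomial (∑ l, v l) (∏ l, A (t l) (v l)) =
          (∏ l, A (t l) (v l)) • monomial (∑ l, v l) (1 : K)),
      smul_smul]
    congr 1
    ring
  have hcollapse : ∀ u ∈ PF, ∀ v ∈ PF,
      (∑ t : Fin k → ι, ∏ l, B (t l) (u l) * A (t l) (v l)) =
        if u = v then ∏ l, ((NFact (u l) : K))⁻¹ else 0 := by
    intro u hu v hv
    rw [← Fintype.prod_sum (fun l i => B i (u l) * A i (v l))]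
    rw [Finset.prod_congr rfl fun l (_ : l ∈ Finset.univ) =>
      horth (u l) (Fintype.mem_piFinset.mp hu l) (v l) (Fintype.mem_piFinset.mp hv l)]
    by_cases huv : u = v
    · subst huv
      rw [if_pos rfl]
      exact Finset.prod_congr rfl fun l _ => by rw [if_pos rfl, one_mul]
    · rw [if_neg huv]
      obtain ⟨l₀, hl₀⟩ := Function.ne_iff.mp huv
      exact Finset.prod_eq_zero (Finset.mem_univ l₀) (by rw [if_neg hl₀, zero_mul])
  have hRHS : (∑ t : Fin k → ι, apolS (∏ l, qstar (t l)) f • ∏ l, q (t l))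
      = ∑ u ∈ PF, ((∏ l, ((NFact (u l) : K))⁻¹) * W u) • monomial (∑ l, u l) (1 : K) := by
    rw [Finset.sum_congr rfl fun t (_ : t ∈ Finset.univ) => key t, Finset.sum_comm]
    refine Finset.sum_congr rfl fun u hu => ?_
    rw [Finset.sum_comm]
    rw [Finset.sum_congr rfl fun v (hv : v ∈ PF) => (by
      rw [← Finset.sum_smul, ← Finset.sum_mul, hcollapse u hu v hv, ite_mul, zero_mul,
        ite_smul, zero_smul] :
      (∑ t : Fin k → ι, ((∏ l, B (t l) (u l) * A (t l) (v l)) * W u) •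
          monomial (∑ l, v l) (1 : K)) =
        if u = v then ((∏ l, ((NFact (u l) : K))⁻¹) * W u) • monomial (∑ l, v l) (1 : K)
          else 0)]
    rw [Finset.sum_ite_eq PF u
      (fun v => ((∏ l, ((NFact (u l) : K))⁻¹) * W u) • monomial (∑ l, v l) (1 : K)),
      if_pos hu]
  rw [hRHS]
  apply MvPolynomial.ext
  intro e
  rw [coeff_smul, MvPolynomial.coeff_sum, smul_eq_mul]
  rw [Finset.sum_congr rfl fun u (_ : u ∈ PF) => (by rw [coeff_smul, smul_eq_mul,
      coeff_monomial] :
    coeff e (((∏ l, ((NFact (u l) : K))⁻¹) * W u) • monomial (∑ l, u l) (1 : K)) =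
      ((∏ l, ((NFact (u l) : K))⁻¹) * W u) * if (∑ l, u l) = e then 1 else 0)]
  by_cases hce : coeff e f = 0
  · rw [hce, mul_zero]
    refine (Finset.sum_eq_zero fun u _ => ?_).symm
    simp only [hW]
    by_cases hue : (∑ l, u l) = e
    · rw [if_pos hue, mul_one, hue, hce, mul_zero, mul_zero]
    · rw [if_neg hue, mul_zero]
  · have he : ∀ j, bdeg e j = k * d j := fun j => hf e (mem_support_iff.mpr hce) j
    have KS := key_sum (K := K) k d e he
    rw [Finset.sum_congr rfl fun u (_ : u ∈ PF) => (by
        simp only [hW]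
        by_cases hue : (∑ l, u l) = e
        · rw [if_pos hue, if_pos hue, hue, Finset.prod_inv_distrib]
          ring
        · rw [if_neg hue, if_neg hue, zero_mul, mul_zero] :
      ((∏ l, ((NFact (u l) : K))⁻¹) * W u) * (if (∑ l, u l) = e then 1 else 0) =
        (if (∑ l, u l) = e then (NFact e : K) * (∏ l, (NFact (u l) : K))⁻¹ else 0) *
          coeff e f)]
    rw [← Finset.sum_mul, KS]
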